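/- Let C be a coalgebra over a field k and L(C) = C ⊗ C⁺ where C⁺ = ker ε, with left C-coaction Δ ⊗ id and right C-coaction given by (c ⊗ d) ↦ c ⊗ Δ(d) − Δ(c) ⊗ d (restricted to C ⊗ C⁺, landing in C ⊗ C⁺ ⊗ C). Then the map λ : L(C) → C, λ(c ⊗ d) = ε(c) d, is a coderivation: Δ ∘ λ = (id_C ⊗ λ) ∘ (left coaction) + (λ ⊗ id_C) ∘ (right coaction). -/

import Mathlib

open TensorProduct LinearMap

variable (k C : Type) [Field k] [AddCommGroup C] [Module k C] [Coalgebra k C]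

/-- `C⁺ = ker ε`. -/
noncomputable def Cplus : Submodule k C := LinearMap.ker (Coalgebra.counit (R := k))

/-- `L(C) = C ⊗ C⁺`. -/
noncomputable abbrev LC := C ⊗[k] ↥(Cplus k C)

/-- The left `C`-coaction `Δ ⊗ id` on `L(C) = C ⊗ C⁺`. -/
noncomputable def lcoact : LC k C →ₗ[k] C ⊗[k] LC k C :=
  (TensorProduct.assoc k C C ↥(Cplus k C)).toLinearMap
    ∘ₗ rTensor ↥(Cplus k C) (Coalgebra.comul (R := k))

/-- The universal coderivation `λ : L(C) → C`, `c ⊗ d ↦ ε(c) d`. -/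
noncomputable def lam : LC k C →ₗ[k] C :=
  (Cplus k C).subtype ∘ₗ (TensorProduct.lid k ↥(Cplus k C)).toLinearMap
    ∘ₗ rTensor ↥(Cplus k C) (Coalgebra.counit (R := k))

/-- The right `C`-coaction on `L(C)` viewed in the ambient space `C ⊗ C ⊗ C`:
`c ⊗ d ↦ c ⊗ Δ(d) − Δ(c) ⊗ d`. -/
noncomputable def rcoactAmb : LC k C →ₗ[k] (C ⊗[k] C) ⊗[k] C :=
  (TensorProduct.assoc k C C C).symm.toLinearMap
      ∘ₗ lTensor C (Coalgebra.comul (R := k) ∘ₗ (Cplus k C).subtype)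
    - TensorProduct.map (Coalgebra.comul (R := k)) (Cplus k C).subtype

/-- The inclusion `L(C) ⊗ C = (C ⊗ C⁺) ⊗ C → (C ⊗ C) ⊗ C`. -/
noncomputable def jmap : LC k C ⊗[k] C →ₗ[k] (C ⊗[k] C) ⊗[k] C :=
  rTensor C (lTensor C (Cplus k C).subtype)

/-- The ambient extension `Λ : C ⊗ C → C`, `c ⊗ d ↦ ε(c) • d` of `λ`. -/
noncomputable def lamAmb : C ⊗[k] C →ₗ[k] C :=
  (TensorProduct.lid k C).toLinearMap ∘ₗ rTensor C (Coalgebra.counit (R := k))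

lemma P0 (c : C) (u : C ⊗[k] C) :
    rTensor C (lTensor C (Coalgebra.counit (R := k)))
      ((TensorProduct.assoc k C C C).symm (c ⊗ₜ u)) =
    (TensorProduct.assoc k C k C).symm
      (c ⊗ₜ rTensor C (Coalgebra.counit (R := k)) u) := by
  induction u using TensorProduct.induction_on with
  | zero => simp
  | tmul x y => simp
  | add a b ha hb => simp [tmul_add, ha, hb]

lemma P2 (c : C) (u : C ⊗[k] C) :
    rTensor C (lamAmb k C) ((TensorProduct.assoc k C C C).symm (c ⊗ₜ u)) =
    Coalgebra.counit (R := k) c • u := by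
  induction u using TensorProduct.induction_on with
  | zero => simp
  | tmul x y => simp [lamAmb, smul_tmul']
  | add a b ha hb => simp [tmul_add, ha, hb]

lemma P1 (d : ↥(Cplus k C)) (t : C ⊗[k] C) :
    lTensor C (lam k C) (TensorProduct.assoc k C C ↥(Cplus k C) (t ⊗ₜ d)) =
    (TensorProduct.rid k C) (lTensor C (Coalgebra.counit (R := k)) t) ⊗ₜ (d : C) := by
  induction t using TensorProduct.induction_on with
  | zero => rw [zero_tmul, map_zero, map_zero, map_zero, map_zero, zero_tmul]
  | tmul a b =>
    rw [TensorProduct.assoc_tmul, lTensor_tmul, lTensor_tmul, TensorProduct.rid_tmul]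
    simp only [lam, coe_comp, Function.comp_apply, LinearEquiv.coe_coe, rTensor_tmul,
      TensorProduct.lid_tmul, Submodule.coe_subtype, SetLike.val_smul]
    rw [smul_tmul]
  | add a b ha hb => simp [add_tmul, ha, hb]

lemma L1 : rTensor C (lTensor C (Coalgebra.counit (R := k))) ∘ₗ rcoactAmb k C = 0 := by
  apply TensorProduct.ext'
  intro c d
  simp only [rcoactAmb, comp_apply, LinearMap.sub_apply, LinearEquiv.coe_coe, lTensor_tmul,
    TensorProduct.map_tmul, map_sub, coe_comp, Function.comp_apply, Submodule.coe_subtype,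
    LinearMap.zero_apply]
  rw [P0, Coalgebra.rTensor_counit_comul, rTensor_tmul, Coalgebra.lTensor_counit_comul]
  simp [TensorProduct.assoc_symm_tmul]

/-- **The universal coderivation.** For a coalgebra `C` over a field `k`, the right
coaction `c ⊗ d ↦ c ⊗ Δ(d) − Δ(c) ⊗ d` on `L(C) = C ⊗ C⁺` indeed lands in
`C ⊗ C⁺ ⊗ C`, and the map `λ(c ⊗ d) = ε(c) d` is a coderivation:
`Δ ∘ λ = (id ⊗ λ) ∘ (left coaction) + (λ ⊗ id) ∘ (right coaction)`. -/
theorem universal_coderivation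
    (k C : Type) [Field k] [AddCommGroup C] [Module k C] [Coalgebra k C] :
    (∀ x : LC k C, rcoactAmb k C x ∈ LinearMap.range (jmap k C)) ∧
    (Coalgebra.comul (R := k)) ∘ₗ lam k C =
      lTensor C (lam k C) ∘ₗ lcoact k C + rTensor C (lamAmb k C) ∘ₗ rcoactAmb k C := by
  constructor
  · intro x
    have hexact : Function.Exact ((Cplus k C).subtype) (Coalgebra.counit (R := k)) :=
      LinearMap.exact_iff.mpr (Submodule.range_subtype _).symm
    have h3 := Module.Flat.rTensor_exact (R := k) C (Module.Flat.lTensor_exact (R := k) C hexact)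
    have hzero : rTensor C (lTensor C (Coalgebra.counit (R := k))) (rcoactAmb k C x) = 0 := by
      have := congrFun (congrArg DFunLike.coe (L1 k C)) x
      simpa using this
    obtain ⟨y, hy⟩ := (h3 _).mp hzero
    exact ⟨y, hy⟩
  · apply TensorProduct.ext'
    intro c d
    simp only [comp_apply, LinearMap.add_apply, lcoact, rcoactAmb, LinearMap.sub_apply, LinearEquiv.coe_coe,
      rTensor_tmul, lTensor_tmul, TensorProduct.map_tmul, coe_comp, Function.comp_apply,
      Submodule.coe_subtype, map_sub]
    rw [P1, P2, Coalgebra.lTensor_counit_comul]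
    have hlam : lam k C (c ⊗ₜ d) = Coalgebra.counit (R := k) c • (d : C) := by
      simp [lam]
    have hlamAmb : lamAmb k C (Coalgebra.comul (R := k) c) = c := by
      simp [lamAmb, Coalgebra.rTensor_counit_comul]
    rw [hlam, hlamAmb, map_smul]
    simp only [TensorProduct.rid_tmul, one_smul]
    abel
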